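/- arXiv:1202.4741 — 3 statements merged into one kernel-verified Lean document; each statement's English description precedes it below -/
import Mathlib

section
/- Let ε > 0 and let a, a' ∈ ℝ with |a − a'| ≤ 1. Let μ be the measure on ℝ with density x ↦ (ε/2)·exp(−ε·|x − a|) with respect to Lebesgue measure, and μ' the measure with density x ↦ (ε/2)·exp(−ε·|x − a'|). Then for every measurable set S ⊆ ℝ, μ(S) ≤ exp(ε)·μ'(S). (The Laplace mechanism applied to a real-valued sensitivity-1 quantity is ε-differentially private.) -/
open MeasureTheory Real

/-- The Laplace mechanism on a real-valued, sensitivity-1 quantity is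
`ε`-differentially private: if `|a - a'| ≤ 1`, then the distribution of `a + Lap(1/ε)`
assigns to every measurable set at most `exp ε` times the mass assigned by the
distribution of `a' + Lap(1/ε)`. -/
theorem laplace_mechanism_dp (ε a a' : ℝ) (hε : 0 < ε) (ha : |a - a'| ≤ 1) :
    ∀ S : Set ℝ, MeasurableSet S →
      (volume.withDensity fun x => ENNReal.ofReal ((ε / 2) * Real.exp (-ε * |x - a|))) S ≤
        ENNReal.ofReal (Real.exp ε) *
          (volume.withDensity fun x => ENNReal.ofReal ((ε / 2) * Real.exp (-ε * |x - a'|))) S := by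
  intro S hS
  rw [withDensity_apply _ hS, withDensity_apply _ hS,
    ← MeasureTheory.lintegral_const_mul' _ _ ENNReal.ofReal_ne_top]
  refine lintegral_mono fun x => ?_
  rw [← ENNReal.ofReal_mul (Real.exp_nonneg _)]
  refine ENNReal.ofReal_le_ofReal ?_
  rw [← mul_assoc, mul_comm (Real.exp ε), mul_assoc]
  refine mul_le_mul_of_nonneg_left ?_ (by positivity)
  rw [← Real.exp_add]
  refine Real.exp_le_exp.2 ?_
  have h1 : |x - a| ≥ |x - a'| - 1 := by
    have := abs_sub_abs_le_abs_sub (x - a') (x - a)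
    have h2 : |x - a' - (x - a)| = |a - a'| := by rw [show x - a' - (x - a) = a - a' by ring]
    nlinarith [abs_nonneg (x - a')]
  nlinarith
end

section
/- Let ε > 0, k ≥ 1, and let a, a' ∈ ℝ^k with ℓ1 distance ‖a − a'‖₁ ≤ 1. Let μ be the measure on ℝ^k with density x ↦ ∏_{i=1}^k (ε/2)·exp(−ε·|x_i − a_i|) with respect to Lebesgue measure, and μ' the corresponding measure centered at a'. Then for every measurable set S ⊆ ℝ^k, μ(S) ≤ exp(ε)·μ'(S). (Releasing f(D) + (X₁,…,X_k) with independent X_i ~ Lap(1/ε), where f has ℓ1 sensitivity 1 on neighboring databases, preserves ε-differential privacy.) -/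
open MeasureTheory Real

/-- The `k`-dimensional Laplace mechanism with ℓ1-sensitivity 1 is `ε`-differentially
private: if `‖a - a'‖₁ = ∑ i, |a i - a' i| ≤ 1`, then the distribution of
`a + (X₁, …, X_k)` with independent `X_i ~ Lap(1/ε)` assigns to every measurable set
at most `exp ε` times the mass assigned by the distribution of `a' + (X₁, …, X_k)`. -/
theorem laplace_mechanism_dp_multidim (ε : ℝ) (k : ℕ) (hk : 1 ≤ k)
    (a a' : Fin k → ℝ) (hε : 0 < ε) (ha : ∑ i, |a i - a' i| ≤ 1) :
    ∀ S : Set (Fin k → ℝ), MeasurableSet S →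
      ((volume : Measure (Fin k → ℝ)).withDensity
          (fun x => ENNReal.ofReal (∏ i, (ε / 2) * Real.exp (-ε * |x i - a i|)))) S ≤
        ENNReal.ofReal (Real.exp ε) *
          ((volume : Measure (Fin k → ℝ)).withDensity
            (fun x => ENNReal.ofReal (∏ i, (ε / 2) * Real.exp (-ε * |x i - a' i|)))) S := by
  intro S hS
  rw [withDensity_apply _ hS, withDensity_apply _ hS, ← lintegral_const_mul' _ _ ENNReal.ofReal_ne_top]
  apply lintegral_mono
  intro x
  dsimp only
  rw [← ENNReal.ofReal_mul (Real.exp_pos ε).le]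
  apply ENNReal.ofReal_le_ofReal
  have hprod : ∀ b : Fin k → ℝ, ∏ i, (ε / 2) * Real.exp (-ε * |x i - b i|)
      = (ε / 2) ^ k * Real.exp (-ε * ∑ i, |x i - b i|) := by
    intro b
    rw [Finset.prod_mul_distrib, Finset.prod_const, Finset.card_univ, Fintype.card_fin,
      ← Real.exp_sum, Finset.mul_sum]
  rw [hprod, hprod, ← mul_assoc, mul_comm (Real.exp ε), mul_assoc, ← Real.exp_add]
  have hpow : (0:ℝ) ≤ (ε / 2) ^ k := pow_nonneg (by linarith) k
  apply mul_le_mul_of_nonneg_left _ hpow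
  apply Real.exp_le_exp.mpr
  have htri : ∑ i, |x i - a' i| ≤ ∑ i, |x i - a i| + ∑ i, |a i - a' i| := by
    rw [← Finset.sum_add_distrib]
    apply Finset.sum_le_sum
    intro i _
    calc |x i - a' i| = |(x i - a i) + (a i - a' i)| := by ring_nf
      _ ≤ |x i - a i| + |a i - a' i| := abs_add_le _ _
  have h : ∑ i, |x i - a' i| ≤ ∑ i, |x i - a i| + 1 := by linarith
  nlinarith [mul_le_mul_of_nonneg_left h hε.le]
end

section
/- Let α ∈ (0,1). For each integer j ≥ 1 let n_j be an integer with n_j ≥ 100·(log(j+1) + 1)/α², and let (X_{j,i})_{j ≥ 1, 1 ≤ i ≤ n_j} be a family of mutually independent random variables, all taking values in [0,1] with common mean μ. Then the probability that there exists some j ≥ 1 with |(1/n_j)·Σ_{i=1}^{n_j} X_{j,i} − μ| ≥ α/4 is less than 1/12. -/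
open MeasureTheory Real

lemma exp_le_quad {y : ℝ} (hy : |y| ≤ 1) : Real.exp y ≤ 1 + y + y ^ 2 := by
  have h := Real.exp_bound hy (n := 2) (by norm_num)
  have hs : ∑ i ∈ Finset.range 2, y ^ i / (Nat.factorial i : ℝ) = 1 + y := by
    simp [Finset.sum_range_succ]
  rw [hs] at h
  have h3 := abs_le.mp h
  norm_num at h3
  nlinarith [h3.2, sq_nonneg y, sq_abs y]

lemma integrable_of_bdd {Ω : Type*} [MeasurableSpace Ω] {ℙ : Measure Ω} [IsFiniteMeasure ℙ]
    {f : Ω → ℝ} (hf : Measurable f) (C : ℝ) (h : ∀ ω, |f ω| ≤ C) : Integrable f ℙ :=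
  (integrable_const C).mono' hf.aestronglyMeasurable (Filter.Eventually.of_forall h)

lemma mgf_le_of_Icc {Ω : Type*} [MeasurableSpace Ω] {ℙ : Measure Ω}
    [IsProbabilityMeasure ℙ] {Y : Ω → ℝ} (hY : Measurable Y)
    (hr : ∀ ω, Y ω ∈ Set.Icc (0:ℝ) 1) {m t : ℝ} (hm : ∫ ω, Y ω ∂ℙ = m)
    (ht : |t| ≤ 1) :
    ProbabilityTheory.mgf Y ℙ t ≤ Real.exp (t * m + t ^ 2 / 4) := by
  have hYb : ∀ ω, |Y ω| ≤ 1 := fun ω => abs_le.mpr ⟨by linarith [(hr ω).1], (hr ω).2⟩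
  have hIY : Integrable Y ℙ := integrable_of_bdd hY 1 hYb
  have hm0 : 0 ≤ m := hm ▸ integral_nonneg fun ω => (hr ω).1
  have hm1 : m ≤ 1 := by
    rw [← hm]
    calc ∫ ω, Y ω ∂ℙ ≤ ∫ _, (1:ℝ) ∂ℙ := integral_mono hIY (integrable_const 1) fun ω => (hr ω).2
    _ = 1 := by simp
  have hYmb : ∀ ω, |Y ω - m| ≤ 1 := fun ω => abs_le.mpr ⟨by linarith [(hr ω).1], by linarith [(hr ω).2]⟩
  have hIY2 : Integrable (fun ω => (Y ω - m) ^ 2) ℙ := by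
    refine integrable_of_bdd (by fun_prop) 1 fun ω => ?_
    rw [abs_pow ]
    calc |Y ω - m| ^ 2 ≤ 1 ^ 2 := by gcongr; exact hYmb ω
    _ = 1 := one_pow 2
  have hIYsq : Integrable (fun ω => Y ω ^ 2) ℙ := by
    refine integrable_of_bdd (by fun_prop) 1 fun ω => ?_
    rw [abs_pow]
    calc |Y ω| ^ 2 ≤ 1 ^ 2 := by gcongr; exact hYb ω
    _ = 1 := one_pow 2
  -- variance bound
  have hvar : ∫ ω, (Y ω - m) ^ 2 ∂ℙ ≤ 1 / 4 := by
    have hexp : (fun ω => (Y ω - m) ^ 2) = fun ω => (Y ω ^ 2 - (2 * m) * Y ω) + m ^ 2 := by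
      funext ω; ring
    have hsqle : ∫ ω, Y ω ^ 2 ∂ℙ ≤ m := by
      rw [← hm]
      exact integral_mono hIYsq hIY fun ω => by nlinarith [(hr ω).1, (hr ω).2]
    have e1 : Integrable (fun ω => Y ω ^ 2 - 2 * m * Y ω) ℙ := hIYsq.sub (hIY.const_mul _)
    rw [hexp, integral_add e1 (integrable_const _),
      integral_sub hIYsq (hIY.const_mul _), integral_const_mul, hm, integral_const]
    simp only [measure_univ, ENNReal.toReal_one, probReal_univ, smul_eq_mul, one_mul]
    nlinarith [hsqle, sq_nonneg (1 - 2 * m)]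
  -- pointwise exp bound
  have hIexp : Integrable (fun ω => Real.exp (t * (Y ω - m))) ℙ := by
    refine integrable_of_bdd (by fun_prop) (Real.exp 1) fun ω => ?_
    rw [abs_of_pos (Real.exp_pos _), Real.exp_le_exp]
    calc t * (Y ω - m) ≤ |t * (Y ω - m)| := le_abs_self _
    _ = |t| * |Y ω - m| := abs_mul _ _
    _ ≤ 1 * 1 := mul_le_mul ht (hYmb ω) (abs_nonneg _) zero_le_one
    _ = 1 := one_mul 1
  have hcent : ∫ ω, Real.exp (t * (Y ω - m)) ∂ℙ ≤ 1 + t ^ 2 / 4 := by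
    have hpt : ∀ ω, Real.exp (t * (Y ω - m)) ≤ 1 + t * (Y ω - m) + t ^ 2 * (Y ω - m) ^ 2 := by
      intro ω
      have habs : |t * (Y ω - m)| ≤ 1 := by
        rw [abs_mul]
        calc |t| * |Y ω - m| ≤ 1 * 1 := mul_le_mul ht (hYmb ω) (abs_nonneg _) zero_le_one
        _ = 1 := one_mul 1
      have := exp_le_quad habs
      nlinarith [this]
    have hIrhs : Integrable (fun ω => 1 + t * (Y ω - m) + t ^ 2 * (Y ω - m) ^ 2) ℙ :=
      (((integrable_const 1).add ((hIY.sub (integrable_const m)).const_mul t)).add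
        (hIY2.const_mul _))
    calc ∫ ω, Real.exp (t * (Y ω - m)) ∂ℙ
        ≤ ∫ ω, (1 + t * (Y ω - m) + t ^ 2 * (Y ω - m) ^ 2) ∂ℙ :=
          integral_mono hIexp hIrhs hpt
    _ = 1 + t * (m - m) + t ^ 2 * ∫ ω, (Y ω - m) ^ 2 ∂ℙ := by
        have e2 : Integrable (fun ω => 1 + t * (Y ω - m)) ℙ :=
          (integrable_const 1).add ((hIY.sub (integrable_const m)).const_mul t)
        have e3 : Integrable (fun ω => t * (Y ω - m)) ℙ :=
          (hIY.sub (integrable_const m)).const_mul t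
        rw [integral_add e2 (hIY2.const_mul _), integral_add (integrable_const 1) e3,
          integral_const_mul, integral_const_mul, integral_sub hIY (integrable_const m),
          hm, integral_const, integral_const]
        simp [measure_univ]
    _ ≤ 1 + t ^ 2 / 4 := by nlinarith [sq_nonneg t]
  -- assemble
  have hmgf : ProbabilityTheory.mgf Y ℙ t =
      Real.exp (t * m) * ∫ ω, Real.exp (t * (Y ω - m)) ∂ℙ := by
    rw [ProbabilityTheory.mgf, ← integral_const_mul]
    congr 1
    funext ω
    rw [← Real.exp_add]
    ring_nf
  rw [hmgf, Real.exp_add]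
  have h1 : ∫ ω, Real.exp (t * (Y ω - m)) ∂ℙ ≤ Real.exp (t ^ 2 / 4) :=
    hcent.trans (by linarith [Real.add_one_le_exp (t ^ 2 / 4)])
  exact mul_le_mul_of_nonneg_left h1 (Real.exp_pos _).le

lemma chernoff_epoch {Ω : Type*} [MeasurableSpace Ω] {ℙ : Measure Ω}
    [IsProbabilityMeasure ℙ] {ι : Type*} (Y : ι → Ω → ℝ)
    (hY : ∀ i, Measurable (Y i))
    (hind : ProbabilityTheory.iIndepFun Y ℙ)
    (s : Finset ι) (hr : ∀ i ω, Y i ω ∈ Set.Icc (0:ℝ) 1)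
    (m : ℝ) (hm : ∀ i, ∫ ω, Y i ω ∂ℙ = m)
    {α : ℝ} (hα : α ∈ Set.Ioo (0:ℝ) 1) :
    (ℙ {ω | |∑ i ∈ s, Y i ω - s.card * m| ≥ s.card * (α/4)}).toReal ≤
      2 * Real.exp (-(s.card : ℝ) * α ^ 2 / 16) := by
  obtain ⟨hα0, hα1⟩ := hα
  set c : ℝ := (s.card : ℝ) with hc
  have hc0 : 0 ≤ c := Nat.cast_nonneg _
  have hsum_apply : ∀ ω, (∑ i ∈ s, Y i) ω = ∑ i ∈ s, Y i ω := fun ω => by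
    simp [Finset.sum_apply]
  have hsum_bdd : ∀ ω, |(∑ i ∈ s, Y i) ω| ≤ c := by
    intro ω
    rw [hsum_apply, abs_of_nonneg (Finset.sum_nonneg fun i _ => (hr i ω).1)]
    calc ∑ i ∈ s, Y i ω ≤ ∑ i ∈ s, (1:ℝ) := Finset.sum_le_sum fun i _ => (hr i ω).2
    _ = c := by simp [hc]
  -- integrability of exp(t * sum) for |t| ≤ 1
  have hint : ∀ t : ℝ, |t| ≤ 1 → Integrable (fun ω => Real.exp (t * (∑ i ∈ s, Y i) ω)) ℙ := by
    intro t ht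
    refine integrable_of_bdd (by fun_prop) (Real.exp c) fun ω => ?_
    rw [abs_of_pos (Real.exp_pos _), Real.exp_le_exp]
    calc t * (∑ i ∈ s, Y i) ω ≤ |t * (∑ i ∈ s, Y i) ω| := le_abs_self _
    _ = |t| * |(∑ i ∈ s, Y i) ω| := abs_mul _ _
    _ ≤ 1 * c := mul_le_mul ht (hsum_bdd ω) (abs_nonneg _) zero_le_one
    _ = c := one_mul c
  -- mgf bound for the sum
  have hmgf : ∀ t : ℝ, |t| ≤ 1 →
      ProbabilityTheory.mgf (∑ i ∈ s, Y i) ℙ t ≤ Real.exp (c * (t * m + t ^ 2 / 4)) := by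
    intro t ht
    rw [hind.mgf_sum hY s]
    calc ∏ i ∈ s, ProbabilityTheory.mgf (Y i) ℙ t
        ≤ ∏ i ∈ s, Real.exp (t * m + t ^ 2 / 4) :=
          Finset.prod_le_prod (fun i _ => ProbabilityTheory.mgf_nonneg)
            (fun i _ => mgf_le_of_Icc (hY i) (hr i) (hm i) ht)
    _ = Real.exp (c * (t * m + t ^ 2 / 4)) := by
        rw [Finset.prod_const, ← Real.exp_nat_mul, hc]
  -- upper tail
  have ht1 : |α / 2| ≤ 1 := by rw [abs_of_pos (by linarith)]; linarith
  have ht2 : |-(α / 2)| ≤ 1 := by rw [abs_neg]; exact ht1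
  have hup : (ℙ {ω | c * m + c * (α / 4) ≤ (∑ i ∈ s, Y i) ω}).toReal ≤
      Real.exp (-c * α ^ 2 / 16) := by
    calc (ℙ {ω | c * m + c * (α / 4) ≤ (∑ i ∈ s, Y i) ω}).toReal
        ≤ Real.exp (-(α/2) * (c * m + c * (α / 4))) *
            ProbabilityTheory.mgf (∑ i ∈ s, Y i) ℙ (α/2) :=
          ProbabilityTheory.measure_ge_le_exp_mul_mgf _ (by linarith) (hint _ ht1)
    _ ≤ Real.exp (-(α/2) * (c * m + c * (α / 4))) * Real.exp (c * ((α/2) * m + (α/2) ^ 2 / 4)) :=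
          mul_le_mul_of_nonneg_left (hmgf _ ht1) (Real.exp_pos _).le
    _ = Real.exp (-c * α ^ 2 / 16) := by rw [← Real.exp_add]; ring_nf
  have hlo : (ℙ {ω | (∑ i ∈ s, Y i) ω ≤ c * m - c * (α / 4)}).toReal ≤
      Real.exp (-c * α ^ 2 / 16) := by
    calc (ℙ {ω | (∑ i ∈ s, Y i) ω ≤ c * m - c * (α / 4)}).toReal
        ≤ Real.exp (-(-(α/2)) * (c * m - c * (α / 4))) *
            ProbabilityTheory.mgf (∑ i ∈ s, Y i) ℙ (-(α/2)) :=
          ProbabilityTheory.measure_le_le_exp_mul_mgf _ (by linarith) (hint _ ht2)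
    _ ≤ Real.exp (-(-(α/2)) * (c * m - c * (α / 4))) *
          Real.exp (c * ((-(α/2)) * m + (-(α/2)) ^ 2 / 4)) :=
          mul_le_mul_of_nonneg_left (hmgf _ ht2) (Real.exp_pos _).le
    _ = Real.exp (-c * α ^ 2 / 16) := by rw [← Real.exp_add]; ring_nf
  -- combine
  have hsub : {ω | |∑ i ∈ s, Y i ω - s.card * m| ≥ s.card * (α/4)} ⊆
      {ω | c * m + c * (α / 4) ≤ (∑ i ∈ s, Y i) ω} ∪
      {ω | (∑ i ∈ s, Y i) ω ≤ c * m - c * (α / 4)} := by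
    intro ω hω
    simp only [Set.mem_setOf_eq, ge_iff_le] at hω
    rcases le_abs.mp hω with h | h
    · exact Or.inl (by simp [Set.mem_setOf_eq, hsum_apply]; linarith)
    · exact Or.inr (by simp [Set.mem_setOf_eq, hsum_apply]; linarith)
  have hmeasle : ℙ {ω | |∑ i ∈ s, Y i ω - s.card * m| ≥ s.card * (α/4)} ≤
      ℙ {ω | c * m + c * (α / 4) ≤ (∑ i ∈ s, Y i) ω} +
      ℙ {ω | (∑ i ∈ s, Y i) ω ≤ c * m - c * (α / 4)} :=
    (measure_mono hsub).trans (measure_union_le _ _)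
  calc (ℙ {ω | |∑ i ∈ s, Y i ω - s.card * m| ≥ s.card * (α/4)}).toReal
      ≤ (ℙ {ω | c * m + c * (α / 4) ≤ (∑ i ∈ s, Y i) ω} +
        ℙ {ω | (∑ i ∈ s, Y i) ω ≤ c * m - c * (α / 4)}).toReal :=
        ENNReal.toReal_mono (by finiteness) hmeasle
  _ = (ℙ {ω | c * m + c * (α / 4) ≤ (∑ i ∈ s, Y i) ω}).toReal +
      (ℙ {ω | (∑ i ∈ s, Y i) ω ≤ c * m - c * (α / 4)}).toReal :=
        ENNReal.toReal_add (measure_ne_top _ _) (measure_ne_top _ _)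
  _ ≤ 2 * Real.exp (-c * α ^ 2 / 16) := by linarith


/-- Union bound over all epochs: with epoch `j` containing `n j ≥ 100(log(j+1)+1)/α²`
samples, and all samples across all epochs mutually independent with values in `[0,1]`
and common mean `m`, the probability that some epoch's empirical average deviates
from `m` by at least `α/4` is less than `1/12`. -/
theorem all_epochs_chernoff_union_bound
    {Ω : Type*} [MeasurableSpace Ω] (ℙ : Measure Ω) [IsProbabilityMeasure ℙ]
    (α : ℝ) (hα : α ∈ Set.Ioo (0 : ℝ) 1)
    (n : ℕ → ℕ) (hn : ∀ j, 1 ≤ j → (n j : ℝ) ≥ 100 * (Real.log (j + 1) + 1) / α ^ 2)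
    (X : ℕ → ℕ → Ω → ℝ) (hmeas : ∀ j i, Measurable (X j i))
    (hindep : ProbabilityTheory.iIndepFun
      (fun p : {p : ℕ × ℕ // 1 ≤ p.1 ∧ p.2 < n p.1} => X p.1.1 p.1.2) ℙ)
    (hrange : ∀ j i, 1 ≤ j → i < n j → ∀ ω, X j i ω ∈ Set.Icc (0 : ℝ) 1)
    (m : ℝ) (hmean : ∀ j i, 1 ≤ j → i < n j → ∫ ω, X j i ω ∂ℙ = m) :
    ℙ {ω | ∃ j, 1 ≤ j ∧
        |(1 / (n j : ℝ)) * ∑ i ∈ Finset.range (n j), X j i ω - m| ≥ α / 4} < 1 / 12 := by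
  obtain ⟨hα0, hα1⟩ := hα
  set C : ℕ → Set Ω := fun j =>
    {ω | 1 ≤ j ∧ |(1 / (n j : ℝ)) * ∑ i ∈ Finset.range (n j), X j i ω - m| ≥ α / 4} with hC
  set b : ℕ → ℝ := fun j => 2 * Real.exp (-(25/4 : ℝ)) * (1 / ((j:ℝ) + 1) ^ 2) with hb
  have hbnn : ∀ j, 0 ≤ b j := fun j => by positivity
  -- per epoch bound
  have hepoch : ∀ j, ℙ (C j) ≤ ENNReal.ofReal (b j) := by
    intro j
    rcases Nat.eq_zero_or_pos j with rfl | hj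
    · have : C 0 = ∅ := by ext ω; simp [hC]
      simp [this]
    · -- positivity of n j
      have hj1 : 1 ≤ j := hj
      have hL0 : 0 ≤ Real.log ((j:ℝ) + 1) :=
        Real.log_nonneg (le_add_of_nonneg_left (Nat.cast_nonneg j))
      have hnR : ((n j : ℝ)) ≥ 100 * (Real.log ((j:ℝ) + 1) + 1) / α ^ 2 := hn j hj
      have hNpos : (0:ℝ) < (n j : ℝ) := lt_of_lt_of_le (by positivity) hnR
      -- the finset of indices for epoch j
      set s : Finset {p : ℕ × ℕ // 1 ≤ p.1 ∧ p.2 < n p.1} :=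
        (Finset.range (n j)).attach.map
          ⟨fun x => ⟨(j, x.1), hj, Finset.mem_range.mp x.2⟩,
            fun a b hab => Subtype.ext (by
              have := congrArg (fun q => q.1.2) hab
              simpa using this)⟩ with hs
      have hcard : (s.card : ℝ) = (n j : ℝ) := by
        simp [hs, Finset.card_map, Finset.card_attach, Finset.card_range]
      have hsumeq : ∀ ω, ∑ p ∈ s, X p.1.1 p.1.2 ω = ∑ i ∈ Finset.range (n j), X j i ω := by
        intro ω
        rw [hs, Finset.sum_map]
        show ∑ x ∈ (Finset.range (n j)).attach, X j x.1 ω = _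
        exact Finset.sum_attach (Finset.range (n j)) (fun i => X j i ω)
      have hch := chernoff_epoch (ℙ := ℙ) (fun p : {p : ℕ × ℕ // 1 ≤ p.1 ∧ p.2 < n p.1} => X p.1.1 p.1.2)
        (fun p => hmeas _ _) hindep s (fun p ω => hrange _ _ p.2.1 p.2.2 ω)
        m (fun p => hmean _ _ p.2.1 p.2.2) ⟨hα0, hα1⟩
      -- identify the sets
      have hset : C j = {ω | |∑ p ∈ s, X p.1.1 p.1.2 ω - (s.card : ℝ) * m| ≥ (s.card : ℝ) * (α/4)} := by
        ext ω
        simp only [hC, Set.mem_setOf_eq, hj1, true_and, hsumeq ω, hcard, ge_iff_le]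
        have heq : (1 / (n j : ℝ)) * ∑ i ∈ Finset.range (n j), X j i ω - m =
            (∑ i ∈ Finset.range (n j), X j i ω - (n j : ℝ) * m) / (n j : ℝ) := by
          field_simp
        rw [heq, abs_div, abs_of_pos hNpos, le_div_iff₀ hNpos, mul_comm]
      -- numeric bound on the exponential
      have hexp_le : 2 * Real.exp (-(s.card : ℝ) * α ^ 2 / 16) ≤ b j := by
        rw [hcard, hb]
        have h1 : 100 * (Real.log ((j:ℝ) + 1) + 1) ≤ (n j : ℝ) * α ^ 2 := by
          have hα2 : (0:ℝ) < α ^ 2 := by positivity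
          calc 100 * (Real.log ((j:ℝ) + 1) + 1)
              = (100 * (Real.log ((j:ℝ) + 1) + 1) / α ^ 2) * α ^ 2 := by field_simp
          _ ≤ (n j : ℝ) * α ^ 2 := mul_le_mul_of_nonneg_right hnR hα2.le
        have h2 : -(n j : ℝ) * α ^ 2 / 16 ≤ -(25/4) * (Real.log ((j:ℝ) + 1) + 1) := by
          linarith
        calc 2 * Real.exp (-(n j : ℝ) * α ^ 2 / 16)
            ≤ 2 * Real.exp (-(25/4) * (Real.log ((j:ℝ) + 1) + 1)) := by
              gcongr
        _ ≤ 2 * Real.exp (-(25/4) + -2 * Real.log ((j:ℝ) + 1)) := by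
              gcongr
              linarith
        _ = 2 * Real.exp (-(25/4 : ℝ)) * (1 / ((j:ℝ) + 1) ^ 2) := by
              have hjp : (0:ℝ) < (j:ℝ) + 1 := by positivity
              have hlog : Real.exp (-2 * Real.log ((j:ℝ) + 1)) = 1 / ((j:ℝ) + 1) ^ 2 := by
                rw [show (-2:ℝ) * Real.log ((j:ℝ) + 1) =
                  -(Real.log ((j:ℝ) + 1) + Real.log ((j:ℝ) + 1)) by ring,
                  Real.exp_neg, Real.exp_add, Real.exp_log hjp, one_div, sq]
              rw [Real.exp_add, hlog]
              ring
      calc ℙ (C j) = ENNReal.ofReal ((ℙ (C j)).toReal) := (ENNReal.ofReal_toReal (measure_ne_top _ _)).symm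
      _ ≤ ENNReal.ofReal (b j) := by
          apply ENNReal.ofReal_le_ofReal
          rw [hset]
          exact hch.trans hexp_le
  -- summability and tsum of b
  have hs2 : Summable (fun j : ℕ => 1 / ((j:ℝ) + 1) ^ 2) := by
    have h := (_root_.summable_nat_add_iff (f := fun n : ℕ => 1 / (n:ℝ) ^ 2) 1).mpr
      (summable_one_div_nat_pow.mpr one_lt_two)
    exact h.congr fun n => by push_cast; ring_nf
  have hsb : Summable b := by
    simpa [hb, mul_assoc] using hs2.mul_left (2 * Real.exp (-(25/4 : ℝ)))
  have hT : ∑' j : ℕ, 1 / ((j:ℝ) + 1) ^ 2 ≤ 2 := by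
    have hz := hasSum_zeta_two
    have h0 : ∑' n : ℕ, 1 / ((n:ℝ)) ^ 2 = Real.pi ^ 2 / 6 := hz.tsum_eq
    have h1 : ∑' n : ℕ, 1 / ((n:ℝ)) ^ 2 =
        1 / ((0:ℕ):ℝ) ^ 2 + ∑' n : ℕ, 1 / (((n+1:ℕ)):ℝ) ^ 2 := hz.summable.tsum_eq_zero_add
    have h2 : ∑' n : ℕ, 1 / (((n+1:ℕ)):ℝ) ^ 2 = ∑' j : ℕ, 1 / ((j:ℝ) + 1) ^ 2 := by
      apply tsum_congr; intro n; push_cast; ring_nf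
    rw [h0, h2] at h1
    norm_num at h1
    have h3 : ∑' j : ℕ, 1 / ((j:ℝ) + 1) ^ 2 = Real.pi ^ 2 / 6 := by
      rw [h1]; simp [one_div]
    rw [h3]
    nlinarith [Real.pi_lt_d2, Real.pi_pos]
  have hV : ∑' j, b j ≤ 2 * Real.exp (-(25/4 : ℝ)) * 2 := by
    rw [hb]
    rw [tsum_mul_left]
    have : (0:ℝ) ≤ 2 * Real.exp (-(25/4 : ℝ)) := by positivity
    exact mul_le_mul_of_nonneg_left hT this
  -- numeric: 4 exp(-25/4) < 1/12
  have hnum : 2 * Real.exp (-(25/4 : ℝ)) * 2 < 1 / 12 := by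
    have h6 : (96:ℝ) < Real.exp (25/4) := by
      have hmono : Real.exp 6 ≤ Real.exp (25/4) := Real.exp_le_exp.mpr (by norm_num)
      have h1 : Real.exp 6 = Real.exp 1 ^ 6 := by
        rw [← Real.exp_nat_mul]; norm_num
      have h2 : (2.7182818283:ℝ) ^ 6 ≤ Real.exp 1 ^ 6 :=
        pow_le_pow_left₀ (by norm_num) Real.exp_one_gt_d9.le 6
      calc (96:ℝ) < 2.7182818283 ^ 6 := by norm_num
      _ ≤ Real.exp 1 ^ 6 := h2
      _ = Real.exp 6 := h1.symm
      _ ≤ Real.exp (25/4) := hmono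
    have hp : (0:ℝ) < Real.exp (25/4) := Real.exp_pos _
    rw [Real.exp_neg,
      show 2 * (Real.exp (25/4))⁻¹ * 2 = 4 / Real.exp (25/4) by rw [div_eq_mul_inv]; ring,
      div_lt_div_iff₀ hp (by norm_num : (0:ℝ) < 12)]
    linarith
  -- assemble
  have hEq : {ω | ∃ j, 1 ≤ j ∧
      |(1 / (n j : ℝ)) * ∑ i ∈ Finset.range (n j), X j i ω - m| ≥ α / 4} = ⋃ j, C j := by
    ext ω; simp [hC, Set.mem_iUnion]
  rw [hEq]
  calc ℙ (⋃ j, C j) ≤ ∑' j, ℙ (C j) := measure_iUnion_le _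
  _ ≤ ∑' j, ENNReal.ofReal (b j) := ENNReal.tsum_le_tsum hepoch
  _ = ENNReal.ofReal (∑' j, b j) := (ENNReal.ofReal_tsum_of_nonneg hbnn hsb).symm
  _ ≤ ENNReal.ofReal (2 * Real.exp (-(25/4 : ℝ)) * 2) := ENNReal.ofReal_le_ofReal hV
  _ < ENNReal.ofReal (1/12) := (ENNReal.ofReal_lt_ofReal_iff (by norm_num)).mpr hnum
  _ = 1 / 12 := by
      rw [ENNReal.ofReal_div_of_pos (by norm_num)]
      norm_num
end
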